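/- Every output AOE of the simplification algorithm is acyclic; that is, if 𝒜 is obtained from a canonical AOE by a finite sequence of applications of Rules 1, 2, and 3, then 𝒜 contains no directed cycle. -/

import Mathlib

namespace AOEPaper

/-- An activity-on-edge graph: a directed multigraph on the vertex set `verts`,
whose task edges are indexed by the type `T` (the distinct task labels), each task `t`
being an edge from `St t` to `En t`, together with a multiset `unl` of unlabeled edges. -/
structure AOE (V T : Type) where
  verts : Finset V
  St : T → V
  En : T → V
  stMem : ∀ t, St t ∈ verts
  enMem : ∀ t, En t ∈ verts
  unl : Multiset (V × V)
  unlMem : ∀ e ∈ unl, e.1 ∈ verts ∧ e.2 ∈ verts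

/-- One-step adjacency: an unlabeled edge or a task edge from `a` to `b`. -/
def AOE.adj {V T : Type} (G : AOE V T) (a b : V) : Prop :=
  (a, b) ∈ G.unl ∨ ∃ t, G.St t = a ∧ G.En t = b

/-- The graph has no directed cycle. -/
def AOE.Acyclic {V T : Type} (G : AOE V T) : Prop :=
  ∀ v : V, ¬ Relation.TransGen G.adj v v

/-- Task `t` reaches task `t'`: `En t = St t'` or there is a directed path from
`En t` to `St t'` (intended only for `t ≠ t'`). -/
def AOE.reach {V T : Type} (G : AOE V T) (t t' : T) : Prop :=
  Relation.ReflTransGen G.adj (G.En t) (G.St t')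

/-- A sequence of tasks in which each task reaches the next. -/
def AOE.chain {V T : Type} (G : AOE V T) (l : List T) : Prop :=
  l.Chain' fun t t' => t ≠ t' ∧ G.reach t t'

/-- A potential critical path: a maximal sequence of tasks in which each task
reaches the next (not a subsequence of any other such sequence). -/
def AOE.critPath {V T : Type} (G : AOE V T) (l : List T) : Prop :=
  G.chain l ∧ ∀ l' : List T, G.chain l' → l.Sublist l' → l' = l

/-- Two AOEs with the same task labels are equivalent if they have the same set of
potential critical paths. -/
def AOE.Equiv {V W T : Type} (G : AOE V T) (H : AOE W T) : Prop :=
  ∀ l : List T, G.critPath l ↔ H.critPath l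

/-- An AOE is optimal if it minimizes the number of vertices in its equivalence class. -/
def Optimal {W T : Type} (G : AOE W T) : Prop :=
  ∀ (U : Type) (H : AOE U T), H.Acyclic → AOE.Equiv G H → G.verts.card ≤ H.verts.card

/-- The vertex map replacing `v` by `u`. -/
def mergeV {V : Type} [DecidableEq V] (u v x : V) : V := if x = v then u else x

theorem mergeV_mem {V : Type} [DecidableEq V] {S : Finset V} (u v x : V) (hx : x ∈ S) :
    mergeV u v x ∈ insert u (S.erase v) := by
  unfold mergeV
  split_ifs with h
  · exact Finset.mem_insert_self _ _
  · exact Finset.mem_insert_of_mem (Finset.mem_erase.mpr ⟨h, hx⟩)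

/-- Merge vertices `u` and `v` into the single vertex `u`. -/
def AOE.merge {V T : Type} [DecidableEq V] (G : AOE V T) (u v : V) : AOE V T where
  verts := insert u (G.verts.erase v)
  St t := mergeV u v (G.St t)
  En t := mergeV u v (G.En t)
  stMem t := mergeV_mem u v (G.St t) (G.stMem t)
  enMem t := mergeV_mem u v (G.En t) (G.enMem t)
  unl := G.unl.map fun e => (mergeV u v e.1, mergeV u v e.2)
  unlMem := by
    intro e he
    rw [Multiset.mem_map] at he
    obtain ⟨a, ha, rfl⟩ := he
    obtain ⟨h1, h2⟩ := G.unlMem a ha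
    exact ⟨mergeV_mem u v a.1 h1, mergeV_mem u v a.2 h2⟩

/-- Delete one copy of the unlabeled edge `(u, v)`. -/
def AOE.delUnl {V T : Type} [DecidableEq V] (G : AOE V T) (u v : V) : AOE V T where
  verts := G.verts
  St := G.St
  En := G.En
  stMem := G.stMem
  enMem := G.enMem
  unl := G.unl.erase (u, v)
  unlMem := fun e he => G.unlMem e (Multiset.mem_of_mem_erase he)

/-- Rule 1 (outgoing version): `u` and `v` are distinct vertices with no outgoing task
edges and precisely the same outgoing neighbors. -/
def Rule1OutCond {V T : Type} (G : AOE V T) (u v : V) : Prop :=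
  u ∈ G.verts ∧ v ∈ G.verts ∧ u ≠ v ∧
    (∀ t, G.St t ≠ u) ∧ (∀ t, G.St t ≠ v) ∧ ∀ w, G.adj u w ↔ G.adj v w

/-- Rule 1 (incoming version): `u` and `v` are distinct vertices with no incoming task
edges and precisely the same incoming neighbors. -/
def Rule1InCond {V T : Type} (G : AOE V T) (u v : V) : Prop :=
  u ∈ G.verts ∧ v ∈ G.verts ∧ u ≠ v ∧
    (∀ t, G.En t ≠ u) ∧ (∀ t, G.En t ≠ v) ∧ ∀ w, G.adj w u ↔ G.adj w v

/-- Rule 2: `(u, v)` is an unlabeled edge and there is another directed path from `u`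
to `v` not using this edge. -/
def Rule2Cond {V T : Type} [DecidableEq V] (G : AOE V T) (u v : V) : Prop :=
  (u, v) ∈ G.unl ∧ Relation.TransGen (G.delUnl u v).adj u v

/-- Rule 3: `(u, v)` is an unlabeled edge such that (i) there is no other path from `u`
to `v`; (ii) if `u` has an outgoing task then `v` has no incoming edge other than `(u,v)`;
(iii) if `v` has an incoming task then `u` has no outgoing edge other than `(u,v)`;
(iv) every incoming neighbor of `v` has a path to every outgoing neighbor of `u`. -/
def Rule3Cond {V T : Type} [DecidableEq V] (G : AOE V T) (u v : V) : Prop :=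
  (u, v) ∈ G.unl ∧
  (¬ Relation.TransGen (G.delUnl u v).adj u v) ∧
  ((∃ t, G.St t = u) → (∀ t, G.En t ≠ v) ∧ ∀ w, (w, v) ∈ G.unl → w = u) ∧
  ((∃ t, G.En t = v) → (∀ t, G.St t ≠ u) ∧ ∀ w, (u, w) ∈ G.unl → w = v) ∧
  ∀ w z, G.adj w v → G.adj u z → Relation.ReflTransGen G.adj w z

/-- One application of a simplification rule. -/
inductive Step {V T : Type} [DecidableEq V] : AOE V T → AOE V T → Prop
  | rule1out {G : AOE V T} (u v : V) : Rule1OutCond G u v → Step G (G.merge u v)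
  | rule1in {G : AOE V T} (u v : V) : Rule1InCond G u v → Step G (G.merge u v)
  | rule2 {G : AOE V T} (u v : V) : Rule2Cond G u v → Step G (G.delUnl u v)
  | rule3 {G : AOE V T} (u v : V) : Rule3Cond G u v → Step G ((G.delUnl u v).merge u v)

/-- A canonical AOE: the naive expansion of an activity-on-node graph. Each task has its
own pair of endpoint vertices, all pairwise distinct; there are a global start vertex `s`
and a global end vertex `e`; unlabeled edges other than those leaving `s` or entering `e`
go from end vertices of tasks to start vertices of tasks; `s` has unlabeled edges to
exactly the vertices whose only incoming edges come from `s`, and `e` has unlabeled edges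
from exactly the vertices whose only outgoing edges go to `e`. -/
def Canonical {V T : Type} [DecidableEq V] [Fintype T] (G : AOE V T) : Prop :=
  G.Acyclic ∧ G.unl.Nodup ∧
  Function.Injective G.St ∧ Function.Injective G.En ∧
  (∀ t t' : T, G.St t ≠ G.En t') ∧
  ∃ s e : V, s ≠ e ∧ s ∈ G.verts ∧ e ∈ G.verts ∧
    (∀ t, G.St t ≠ s ∧ G.St t ≠ e ∧ G.En t ≠ s ∧ G.En t ≠ e) ∧
    (G.verts =
      insert s (insert e (Finset.image G.St Finset.univ ∪ Finset.image G.En Finset.univ))) ∧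
    (∀ a b : V, (a, b) ∈ G.unl → a ≠ s → b ≠ e → (∃ t, G.En t = a) ∧ ∃ t', G.St t' = b) ∧
    (∀ b : V, (s, b) ∈ G.unl ↔
      b ∈ G.verts ∧ b ≠ s ∧ (∀ t, G.En t ≠ b) ∧ ∀ a, (a, b) ∈ G.unl → a = s) ∧
    (∀ a : V, (a, e) ∈ G.unl ↔
      a ∈ G.verts ∧ a ≠ e ∧ (∀ t, G.St t ≠ a) ∧ ∀ b, (a, b) ∈ G.unl → b = e)

/-- An output AOE: obtained from a canonical AOE by a finite sequence of rule
applications, such that no rule can still be applied. -/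
def IsOutput {V T : Type} [DecidableEq V] [Fintype T] (G A : AOE V T) : Prop :=
  Canonical G ∧ Relation.ReflTransGen Step G A ∧ ∀ B : AOE V T, ¬ Step A B

theorem mergeSetV_mem {V : Type} [DecidableEq V] {S : Finset V} (C : Finset V) (c x : V)
    (hx : x ∈ S) : (if x ∈ C then c else x) ∈ insert c (S \ C) := by
  split_ifs with h
  · exact Finset.mem_insert_self _ _
  · exact Finset.mem_insert_of_mem (Finset.mem_sdiff.mpr ⟨hx, h⟩)

/-- Merge all vertices of `C` into the single vertex `c`. -/
def AOE.mergeSet {V T : Type} [DecidableEq V] (G : AOE V T) (C : Finset V) (c : V) :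
    AOE V T where
  verts := insert c (G.verts \ C)
  St t := if G.St t ∈ C then c else G.St t
  En t := if G.En t ∈ C then c else G.En t
  stMem t := mergeSetV_mem C c (G.St t) (G.stMem t)
  enMem t := mergeSetV_mem C c (G.En t) (G.enMem t)
  unl := G.unl.map fun e => (if e.1 ∈ C then c else e.1, if e.2 ∈ C then c else e.2)
  unlMem := by
    intro e he
    rw [Multiset.mem_map] at he
    obtain ⟨a, ha, rfl⟩ := he
    obtain ⟨h1, h2⟩ := G.unlMem a ha
    exact ⟨mergeSetV_mem C c a.1 h1, mergeSetV_mem C c a.2 h2⟩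

lemma delUnl_adj_le {V T : Type} [DecidableEq V] {G : AOE V T} {u v a b : V}
    (h : (G.delUnl u v).adj a b) : G.adj a b := by
  rcases h with h | h
  · exact Or.inl (Multiset.mem_of_mem_erase h)
  · exact Or.inr h

lemma mergeV_ne_v {V : Type} [DecidableEq V] {u v x : V} (huv : u ≠ v) :
    mergeV u v x ≠ v := by
  unfold mergeV; split_ifs with h
  · exact huv
  · exact h

lemma mergeV_eq_cases {V : Type} [DecidableEq V] {u v a b : V}
    (h : mergeV u v a = mergeV u v b) :
    a = b ∨ ((a = u ∨ a = v) ∧ (b = u ∨ b = v)) := by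
  unfold mergeV at h
  split_ifs at h with h1 h2 h2
  · left; rw [h1, h2]
  · right; exact ⟨Or.inr h1, Or.inl h.symm⟩
  · right; exact ⟨Or.inl h, Or.inr h2⟩
  · left; exact h

lemma merge_adj_lift {V T : Type} [DecidableEq V] {G : AOE V T} {u v a b : V}
    (h : (G.merge u v).adj a b) :
    ∃ a' b', mergeV u v a' = a ∧ mergeV u v b' = b ∧ G.adj a' b' := by
  rcases h with h | ⟨t, h1, h2⟩
  · have : (a, b) ∈ G.unl.map fun e => (mergeV u v e.1, mergeV u v e.2) := h
    rw [Multiset.mem_map] at this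
    obtain ⟨e, he, heq⟩ := this
    refine ⟨e.1, e.2, ?_, ?_, Or.inl he⟩
    · exact congrArg Prod.fst heq
    · exact congrArg Prod.snd heq
  · exact ⟨G.St t, G.En t, h1, h2, Or.inr ⟨t, rfl, rfl⟩⟩

/-- Lifting a path in the merged graph back to `G`: either it lifts to a single
path, or to two path segments with one switch between `u` and `v`. -/
lemma merge_lift_path {V T : Type} [DecidableEq V] {G : AOE V T} {u v : V}
    (hD : ∀ a b : V, (a = u ∨ a = v) → (b = u ∨ b = v) → ¬ Relation.TransGen G.adj a b)
    {x y : V} (h : Relation.TransGen (G.merge u v).adj x y) :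
    ∀ x', mergeV u v x' = x →
      ∃ y', mergeV u v y' = y ∧
        (Relation.TransGen G.adj x' y' ∨
          ∃ d d', (d = u ∨ d = v) ∧ (d' = u ∨ d' = v) ∧
            Relation.ReflTransGen G.adj x' d ∧ Relation.TransGen G.adj d' y') := by
  intro x' hx'
  induction h with
  | single hxy =>
    obtain ⟨a', b', ha', hb', hab⟩ := merge_adj_lift hxy
    by_cases hax : a' = x'
    · exact ⟨b', hb', Or.inl (Relation.TransGen.single (hax ▸ hab))⟩
    · rcases mergeV_eq_cases (a := a') (b := x') (ha'.trans hx'.symm) with h1 | ⟨h1, h2⟩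
      · exact absurd h1 hax
      · exact ⟨b', hb', Or.inr ⟨x', a', h2, h1, Relation.ReflTransGen.refl,
          Relation.TransGen.single hab⟩⟩
  | tail _ hzy ih =>
    obtain ⟨z', hz', hcase⟩ := ih
    obtain ⟨a', b', ha', hb', hab⟩ := merge_adj_lift hzy
    by_cases haz : a' = z'
    · subst haz
      rcases hcase with hp | ⟨d, d', hd, hd', hp1, hp2⟩
      · exact ⟨b', hb', Or.inl (hp.tail hab)⟩
      · exact ⟨b', hb', Or.inr ⟨d, d', hd, hd', hp1, hp2.tail hab⟩⟩
    · rcases mergeV_eq_cases (a := a') (b := z') (ha'.trans hz'.symm) with h1 | ⟨h1, h2⟩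
      · exact absurd h1 haz
      · rcases hcase with hp | ⟨d, d', hd, hd', hp1, hp2⟩
        · exact ⟨b', hb', Or.inr ⟨z', a', h2, h1, hp.to_reflTransGen,
            Relation.TransGen.single hab⟩⟩
        · exact absurd hp2 (hD d' z' hd' h2)

lemma merge_acyclic {V T : Type} [DecidableEq V] {G : AOE V T} {u v : V}
    (hG : G.Acyclic) (hne : u ≠ v)
    (huv : ¬ Relation.TransGen G.adj u v) (hvu : ¬ Relation.TransGen G.adj v u) :
    (G.merge u v).Acyclic := by
  have hD : ∀ a b : V, (a = u ∨ a = v) → (b = u ∨ b = v) →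
      ¬ Relation.TransGen G.adj a b := by
    intro a b ha hb h
    rcases ha with rfl | rfl <;> rcases hb with rfl | rfl <;>
      first | exact hG _ h | exact huv h | exact hvu h
  intro x hx
  by_cases hxv : x = v
  · subst hxv
    rw [Relation.TransGen.head'_iff] at hx
    obtain ⟨b, hvb, -⟩ := hx
    obtain ⟨a', b', ha', -, -⟩ := merge_adj_lift hvb
    exact mergeV_ne_v hne ha'
  · have hfx : mergeV u v x = x := by unfold mergeV; rw [if_neg hxv]
    obtain ⟨y', hy', hcase⟩ := merge_lift_path hD hx x hfx
    by_cases hyx : y' = x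
    · subst hyx
      rcases hcase with hp | ⟨d, d', hd, hd', hp1, hp2⟩
      · exact hG y' hp
      · exact hD d' d hd' hd (hp2.trans_left hp1)
    · rcases mergeV_eq_cases (a := y') (b := x) (hy'.trans hfx.symm) with h1 | ⟨h1, h2⟩
      · exact absurd h1 hyx
      · rcases hcase with hp | ⟨d, d', hd, hd', _, hp2⟩
        · exact hD x y' h2 h1 hp
        · exact hD d' y' hd' h1 hp2

lemma rule1out_no_path {V T : Type} {G : AOE V T} {u v : V} (hG : G.Acyclic)
    (hout : ∀ w, G.adj u w ↔ G.adj v w) : ¬ Relation.TransGen G.adj u v := by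
  intro h
  rw [Relation.TransGen.head'_iff] at h
  obtain ⟨c, huc, hcv⟩ := h
  have hvc : G.adj v c := (hout c).mp huc
  exact hG v ((Relation.TransGen.single hvc).trans_left hcv)

lemma rule1in_no_path {V T : Type} {G : AOE V T} {u v : V} (hG : G.Acyclic)
    (hin : ∀ w, G.adj w u ↔ G.adj w v) : ¬ Relation.TransGen G.adj u v := by
  intro h
  rw [Relation.transGen_iff] at h
  rcases h with h | ⟨c, huc, hcv⟩
  · exact hG u (Relation.TransGen.single ((hin u).mpr h))
  · exact hG u (huc.tail ((hin c).mpr hcv))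

lemma step_acyclic {V T : Type} [DecidableEq V] {G A : AOE V T}
    (h : Step G A) (hG : G.Acyclic) : A.Acyclic := by
  cases h with
  | rule1out u v hc =>
    obtain ⟨-, -, hne, -, -, hout⟩ := hc
    exact merge_acyclic hG hne (rule1out_no_path hG hout)
      (rule1out_no_path hG fun w => (hout w).symm)
  | rule1in u v hc =>
    obtain ⟨-, -, hne, -, -, hin⟩ := hc
    exact merge_acyclic hG hne (rule1in_no_path hG hin)
      (rule1in_no_path hG fun w => (hin w).symm)
  | rule2 u v _ =>
    intro x hx
    exact hG x (Relation.TransGen.mono (fun a b => delUnl_adj_le) _ _ hx)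
  | rule3 u v hc =>
    obtain ⟨hmem, hnopath, -, -, -⟩ := hc
    have hH : (G.delUnl u v).Acyclic := fun x hx =>
      hG x (Relation.TransGen.mono (fun a b => delUnl_adj_le) _ _ hx)
    have hne : u ≠ v := by
      rintro rfl
      exact hG u (Relation.TransGen.single (Or.inl hmem))
    have hvu : ¬ Relation.TransGen (G.delUnl u v).adj v u := by
      intro h
      have : Relation.TransGen G.adj v u := Relation.TransGen.mono (fun a b => delUnl_adj_le) _ _ h
      exact hG u (Relation.TransGen.head (Or.inl hmem) this)
    exact merge_acyclic hH hne hnopath hvu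

/-- Any graph obtained from a canonical AOE by a finite sequence of
applications of Rules 1, 2 and 3 contains no directed cycle. -/
theorem stmt6 {V T : Type} [DecidableEq V] [Fintype T] (G A : AOE V T)
    (hG : Canonical G) (h : Relation.ReflTransGen Step G A) : A.Acyclic := by
  induction h with
  | refl => exact hG.1
  | tail _ hstep ih => exact step_acyclic hstep ih

end AOEPaper
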